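/- arXiv:math/0010217 — 3 statements merged into one kernel-verified Lean document; each statement's English description precedes it below -/
import Mathlib

section
/- For every natural number n ≥ 1, the set of additive subgroups of ℤ × ℤ of index n is finite and has exactly σ(n) elements, where σ(n) is the sum of the positive divisors of n. (This is the count of degree-n connected unbranched covers of the torus with a marked point used in the paper's computation of the genus-one invariants of T², whose generating function is G(t) = ∑ σ(n) t^n.) -/
def latHNF (a d b : ℕ) : AddSubgroup (ℤ × ℤ) :=
  AddSubgroup.closure {((a : ℤ), (b : ℤ)), ((0 : ℤ), (d : ℤ))}

lemma mem_latHNF {a d b : ℕ} {p : ℤ × ℤ} :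
    p ∈ latHNF a d b ↔ ∃ m k : ℤ, p.1 = m * a ∧ p.2 = m * b + k * d := by
  rw [latHNF, AddSubgroup.mem_closure_pair]
  constructor
  · rintro ⟨m, k, rfl⟩
    exact ⟨m, k, by simp [smul_eq_mul], by simp [smul_eq_mul]⟩
  · rintro ⟨m, k, h1, h2⟩
    refine ⟨m, k, ?_⟩
    ext <;> simp [smul_eq_mul, h1.symm, h2.symm]

lemma index_latHNF (a d b : ℕ) (ha : 0 < a) (hd : 0 < d) :
    (latHNF a d b).index = a * d := by
  have ha' : (0:ℤ) < a := by exact_mod_cast ha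
  have hd' : (0:ℤ) < d := by exact_mod_cast hd
  let c : Fin a × Fin d → (ℤ × ℤ) ⧸ latHNF a d b :=
    fun t => QuotientAddGroup.mk (((t.1 : ℤ), (t.2 : ℤ)) : ℤ × ℤ)
  have hbij : Function.Bijective c := by
    constructor
    · rintro ⟨r, s⟩ ⟨r', s'⟩ h
      simp only [c, QuotientAddGroup.eq] at h
      rw [mem_latHNF] at h
      obtain ⟨m, k, h1, h2⟩ := h
      simp only [Prod.fst_add, Prod.snd_add, Prod.fst_neg, Prod.snd_neg] at h1 h2
      have hr : (r : ℤ) < a := by exact_mod_cast r.2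
      have hr' : (r' : ℤ) < a := by exact_mod_cast r'.2
      have hs : (s : ℤ) < d := by exact_mod_cast s.2
      have hs' : (s' : ℤ) < d := by exact_mod_cast s'.2
      have hr0 : (0:ℤ) ≤ r := by positivity
      have hr0' : (0:ℤ) ≤ r' := by positivity
      have hs0 : (0:ℤ) ≤ s := by positivity
      have hs0' : (0:ℤ) ≤ s' := by positivity
      have hm : m = 0 := by
        have h1' : m * a < 1 * a := by linarith
        have h2' : (-1) * a < m * a := by linarith
        have hA := lt_of_mul_lt_mul_right h1' ha'.le
        have hB := lt_of_mul_lt_mul_right h2' ha'.le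
        omega
      subst hm
      simp only [zero_mul, zero_add] at h1 h2
      have hk : k = 0 := by
        have h1' : k * d < 1 * d := by linarith
        have h2' : (-1) * d < k * d := by linarith
        have hA := lt_of_mul_lt_mul_right h1' hd'.le
        have hB := lt_of_mul_lt_mul_right h2' hd'.le
        omega
      subst hk
      simp only [zero_mul] at h1 h2
      have hrr : (r : ℤ) = r' := by linarith
      have hss : (s : ℤ) = s' := by linarith
      have : (r : ℕ) = r' := by exact_mod_cast hrr
      have : (s : ℕ) = s' := by exact_mod_cast hss
      ext <;> simp_all
    · intro q
      induction q using QuotientAddGroup.induction_on with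
      | H p =>
        obtain ⟨x, y⟩ := p
        set m := x / (a:ℤ) with hm
        set r := x % (a:ℤ) with hr
        set k := (y - m * b) / (d:ℤ) with hk
        set s := (y - m * b) % (d:ℤ) with hs
        have hr0 : 0 ≤ r := Int.emod_nonneg x (by positivity)
        have hra : r < a := Int.emod_lt_of_pos x ha'
        have hs0 : 0 ≤ s := Int.emod_nonneg _ (by positivity)
        have hsd : s < d := Int.emod_lt_of_pos _ hd'
        refine ⟨(⟨r.toNat, by omega⟩, ⟨s.toNat, by omega⟩), ?_⟩
        simp only [c]
        rw [QuotientAddGroup.eq, mem_latHNF]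
        have hrt : ((r.toNat : ℕ) : ℤ) = r := Int.toNat_of_nonneg hr0
        have hst : ((s.toNat : ℕ) : ℤ) = s := Int.toNat_of_nonneg hs0
        refine ⟨m, k, ?_, ?_⟩
        · simp only [Prod.fst_add, Prod.fst_neg]
          have h := Int.mul_ediv_add_emod x (a:ℤ)
          rw [← hm, ← hr] at h
          rw [hrt]
          linear_combination -h
        · simp only [Prod.snd_add, Prod.snd_neg]
          have h := Int.mul_ediv_add_emod (y - m * b) (d:ℤ)
          rw [← hk, ← hs] at h
          rw [hst]
          linear_combination -h
  have hcard : Nat.card ((ℤ × ℤ) ⧸ latHNF a d b) = a * d := by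
    rw [← Nat.card_eq_of_bijective c hbij]
    simp [Nat.card_eq_fintype_card]
  exact hcard

lemma latHNF_def (a d b : ℕ) : latHNF a d b
    = AddSubgroup.closure {((a : ℤ), (b : ℤ)), ((0 : ℤ), (d : ℤ))} := rfl



lemma exists_latHNF {H : AddSubgroup (ℤ × ℤ)} (hH : H.index ≠ 0) :
    ∃ a d b : ℕ, 0 < a ∧ 0 < d ∧ b < d ∧ H = latHNF a d b := by
  have hfin : Finite ((ℤ × ℤ) ⧸ H) := Nat.finite_of_card_ne_zero hH
  obtain ⟨g, hg⟩ := Int.subgroup_cyclic (H.map (AddMonoidHom.fst ℤ ℤ))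
  obtain ⟨g2, hg2⟩ := Int.subgroup_cyclic (H.comap (AddMonoidHom.inr ℤ ℤ))
  set a := g.natAbs with ha_def
  set d := g2.natAbs with hd_def
  have hmem1 : ∀ x : ℤ, (∃ y, (x, y) ∈ H) ↔ (a : ℤ) ∣ x := by
    intro x
    rw [Int.natAbs_dvd]
    constructor
    · rintro ⟨y, hy⟩
      have : x ∈ H.map (AddMonoidHom.fst ℤ ℤ) := ⟨(x, y), hy, rfl⟩
      rw [hg, AddSubgroup.mem_closure_singleton] at this
      obtain ⟨n, hn⟩ := this
      exact ⟨n, by rw [← hn, smul_eq_mul, mul_comm]⟩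
    · rintro ⟨n, rfl⟩
      have : g * n ∈ H.map (AddMonoidHom.fst ℤ ℤ) := by
        rw [hg, AddSubgroup.mem_closure_singleton]
        exact ⟨n, by rw [smul_eq_mul, mul_comm]⟩
      obtain ⟨p, hp, hp1⟩ := this
      exact ⟨p.2, by rw [← hp1]; exact hp⟩
  have hmem2 : ∀ y : ℤ, ((0 : ℤ), y) ∈ H ↔ (d : ℤ) ∣ y := by
    intro y
    rw [Int.natAbs_dvd]
    have h0 : (((0 : ℤ), y) ∈ H) ↔ y ∈ H.comap (AddMonoidHom.inr ℤ ℤ) := Iff.rfl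
    rw [h0, hg2, AddSubgroup.mem_closure_singleton]
    constructor
    · rintro ⟨n, hn⟩; exact ⟨n, by rw [← hn, smul_eq_mul, mul_comm]⟩
    · rintro ⟨n, rfl⟩; exact ⟨n, by rw [smul_eq_mul, mul_comm]⟩
  have ha : 0 < a := by
    rcases Nat.eq_zero_or_pos a with h0 | h
    · exfalso
      have hinj : Function.Injective
          (fun y : ℤ => (QuotientAddGroup.mk (y, 0) : (ℤ × ℤ) ⧸ H)) := by
        intro y y' hyy
        simp only [QuotientAddGroup.eq] at hyy
        have hm : ((-y + y', (0:ℤ)) : ℤ × ℤ) ∈ H := by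
          convert hyy using 1
          ext <;> simp
        have hdvd' := (hmem1 (-y + y')).mp ⟨0, hm⟩
        rw [h0] at hdvd'
        simp only [Nat.cast_zero, zero_dvd_iff] at hdvd'
        linarith
      have : Finite ℤ := Finite.of_injective _ hinj
      exact not_finite ℤ
    · exact h
  have hd : 0 < d := by
    rcases Nat.eq_zero_or_pos d with h0 | h
    · exfalso
      have hinj : Function.Injective
          (fun y : ℤ => (QuotientAddGroup.mk (0, y) : (ℤ × ℤ) ⧸ H)) := by
        intro y y' hyy
        simp only [QuotientAddGroup.eq] at hyy
        have hm : (((0:ℤ), -y + y') : ℤ × ℤ) ∈ H := by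
          convert hyy using 1
          ext <;> simp
        have hdvd' := (hmem2 (-y + y')).mp hm
        rw [h0] at hdvd'
        simp only [Nat.cast_zero, zero_dvd_iff] at hdvd'
        linarith
      have : Finite ℤ := Finite.of_injective _ hinj
      exact not_finite ℤ
    · exact h
  have hd' : (0:ℤ) < d := by exact_mod_cast hd
  -- the generator (0, d) ∈ H
  have hgen2 : (((0:ℤ), (d:ℤ)) : ℤ × ℤ) ∈ H := (hmem2 d).mpr dvd_rfl
  -- choose b0 with (a, b0) ∈ H
  obtain ⟨b0, hb0⟩ := (hmem1 (a : ℤ)).mpr dvd_rfl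
  set b : ℕ := (b0 % (d:ℤ)).toNat with hb_def
  have hbmod : (b : ℤ) = b0 % (d:ℤ) := Int.toNat_of_nonneg (Int.emod_nonneg _ (by positivity))
  have hb : b < d := by
    have := Int.emod_lt_of_pos b0 hd'
    omega
  have hgen1 : (((a:ℤ), (b:ℤ)) : ℤ × ℤ) ∈ H := by
    have h1 : (((a:ℤ), b0) : ℤ × ℤ) - (b0 / (d:ℤ)) • (((0:ℤ), (d:ℤ)) : ℤ × ℤ) ∈ H :=
      H.sub_mem hb0 (AddSubgroup.zsmul_mem H hgen2 _)
    convert h1 using 1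
    have hed := Int.mul_ediv_add_emod b0 (d:ℤ)
    ext
    · simp
    · simp only [Prod.snd_sub, Prod.smul_snd, smul_eq_mul]
      rw [hbmod]
      linarith
  refine ⟨a, d, b, ha, hd, hb, ?_⟩
  apply le_antisymm
  · intro p hp
    obtain ⟨x, y⟩ := p
    obtain ⟨m, hx⟩ := (hmem1 x).mp ⟨y, hp⟩
    have h2 : (((0:ℤ), y - m * b) : ℤ × ℤ) ∈ H := by
      have := H.sub_mem hp (AddSubgroup.zsmul_mem H hgen1 m)
      convert this using 1
      ext
      · simp only [Prod.fst_sub, Prod.smul_fst, smul_eq_mul]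
        linarith
      · simp [smul_eq_mul]
    obtain ⟨k, hy⟩ := (hmem2 _).mp h2
    rw [mem_latHNF]
    exact ⟨m, k, by linarith, by linarith [hy]⟩
  · rw [latHNF_def]
    rw [AddSubgroup.closure_le]
    rintro p (rfl | rfl)
    · exact hgen1
    · exact hgen2



lemma latHNF_inj {a d b a' d' b' : ℕ} (ha : 0 < a) (hd : 0 < d) (hb : b < d)
    (ha' : 0 < a') (hd' : 0 < d') (hb' : b' < d')
    (h : latHNF a d b = latHNF a' d' b') : a = a' ∧ d = d' ∧ b = b' := by
  have hdd' : ∀ (u v w u' v' w' : ℕ), latHNF u v w = latHNF u' v' w' → 0 < u → (v : ℤ) ∣ v' := by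
    intro u v w u' v' w' he hu
    have hmem : (((0:ℤ), (v':ℤ)) : ℤ × ℤ) ∈ latHNF u v w := by
      rw [he, mem_latHNF]
      exact ⟨0, 1, by simp, by simp⟩
    rw [mem_latHNF] at hmem
    obtain ⟨m, k, h1, h2⟩ := hmem
    simp only at h1 h2
    have hu' : (0:ℤ) < u := by exact_mod_cast hu
    have hm : m = 0 := by
      rcases lt_trichotomy m 0 with hlt | rfl | hgt
      · nlinarith
      · rfl
      · nlinarith
    subst hm
    simp only [zero_mul, zero_add] at h2
    exact ⟨k, by linarith⟩
  have haa' : ∀ (u v w u' v' w' : ℕ), latHNF u v w = latHNF u' v' w' → (u : ℤ) ∣ u' := by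
    intro u v w u' v' w' he
    have hmem : (((u':ℤ), (w':ℤ)) : ℤ × ℤ) ∈ latHNF u v w := by
      rw [he, mem_latHNF]
      exact ⟨1, 0, by simp, by simp⟩
    rw [mem_latHNF] at hmem
    obtain ⟨m, k, h1, h2⟩ := hmem
    exact ⟨m, by simp only at h1; linarith⟩
  have hdeq : d = d' := by
    have h1 := hdd' a d b a' d' b' h ha
    have h2 := hdd' a' d' b' a d b h.symm ha'
    exact Nat.dvd_antisymm (by exact_mod_cast h1) (by exact_mod_cast h2)
  have haeq : a = a' := by
    have h1 := haa' a d b a' d' b' h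
    have h2 := haa' a' d' b' a d b h.symm
    exact Nat.dvd_antisymm (by exact_mod_cast h1) (by exact_mod_cast h2)
  refine ⟨haeq, hdeq, ?_⟩
  subst haeq; subst hdeq
  -- now show b = b'
  have hmem : (((a:ℤ), (b':ℤ)) : ℤ × ℤ) ∈ latHNF a d b := by
    rw [h, mem_latHNF]
    exact ⟨1, 0, by simp, by simp⟩
  rw [mem_latHNF] at hmem
  obtain ⟨m, k, h1, h2⟩ := hmem
  simp only at h1 h2
  have ha' : (0:ℤ) < a := by exact_mod_cast ha
  have hm : m = 1 := by
    rcases lt_trichotomy m 1 with hlt | heq | hgt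
    · nlinarith
    · exact heq
    · nlinarith
  subst hm
  simp only [one_mul] at h2
  have hd' : (0:ℤ) < d := by exact_mod_cast hd
  have hbz : (b:ℤ) < d := by exact_mod_cast hb
  have hbz' : (b':ℤ) < d := by exact_mod_cast hb'
  have hb0 : (0:ℤ) ≤ b := by positivity
  have hb0' : (0:ℤ) ≤ b' := by positivity
  have hk : k = 0 := by
    rcases lt_trichotomy k 0 with hlt | heq | hgt
    · nlinarith
    · exact heq
    · nlinarith
  subst hk
  simp only [zero_mul, add_zero] at h2
  exact_mod_cast h2.symm

/-- The set of additive subgroups of `ℤ × ℤ` of index `n ≥ 1` is finite and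
has exactly `σ(n) = ∑_{d ∣ n} d` elements (the count of degree-`n` connected
unbranched covers of the torus with a marked point). -/
theorem card_index_n_addSubgroups_int_prod (n : ℕ) (hn : 1 ≤ n) :
    {H : AddSubgroup (ℤ × ℤ) | H.index = n}.Finite ∧
      {H : AddSubgroup (ℤ × ℤ) | H.index = n}.ncard = ∑ d ∈ n.divisors, d := by
  classical
  set F : Finset (ℕ × ℕ × ℕ) :=
    n.divisorsAntidiagonal.biUnion
      (fun p => (Finset.range p.2).image (fun b => (p.1, p.2, b))) with hF
  have hmemF : ∀ t : ℕ × ℕ × ℕ, t ∈ F ↔ t.1 * t.2.1 = n ∧ t.2.2 < t.2.1 := by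
    intro t
    simp only [hF, Finset.mem_biUnion, Finset.mem_image, Finset.mem_range,
      Nat.mem_divisorsAntidiagonal]
    constructor
    · rintro ⟨p, ⟨hpn, -⟩, b, hb, rfl⟩; exact ⟨hpn, hb⟩
    · rintro ⟨h1, h2⟩; exact ⟨(t.1, t.2.1), ⟨h1, by omega⟩, t.2.2, h2, rfl⟩
  have hposF : ∀ t : ℕ × ℕ × ℕ, t ∈ F → 0 < t.1 ∧ 0 < t.2.1 := by
    intro t ht
    obtain ⟨h1, h2⟩ := (hmemF t).mp ht
    have h0 : t.1 ≠ 0 ∧ t.2.1 ≠ 0 := by rw [← Nat.mul_ne_zero_iff]; omega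
    omega
  have hset : {H : AddSubgroup (ℤ × ℤ) | H.index = n}
      = ↑(F.image (fun t : ℕ × ℕ × ℕ => latHNF t.1 t.2.1 t.2.2)) := by
    ext H
    simp only [Set.mem_setOf_eq, Finset.coe_image, Set.mem_image, Finset.mem_coe]
    constructor
    · intro hHn
      obtain ⟨a, d, b, ha, hd, hb, rfl⟩ := exists_latHNF (by omega : H.index ≠ 0)
      rw [index_latHNF a d b ha hd] at hHn
      exact ⟨(a, d, b), (hmemF (a, d, b)).mpr ⟨hHn, hb⟩, rfl⟩
    · rintro ⟨t, htF, rfl⟩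
      obtain ⟨h1, h2⟩ := (hmemF t).mp htF
      obtain ⟨ht1, ht2⟩ := hposF t htF
      rw [index_latHNF _ _ _ ht1 ht2, h1]
  have hinj : Set.InjOn (fun t : ℕ × ℕ × ℕ => latHNF t.1 t.2.1 t.2.2) ↑F := by
    intro t ht t' ht' he
    obtain ⟨h1, h2⟩ := (hmemF t).mp ht
    obtain ⟨h1', h2'⟩ := (hmemF t').mp ht'
    obtain ⟨ha, hd⟩ := hposF t ht
    obtain ⟨ha', hd'⟩ := hposF t' ht'
    obtain ⟨e1, e2, e3⟩ := latHNF_inj ha hd h2 ha' hd' h2' he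
    exact Prod.ext e1 (Prod.ext e2 e3)
  have hcardF : F.card = ∑ d ∈ n.divisors, d := by
    rw [hF, Finset.card_biUnion]
    · have : ∀ p ∈ n.divisorsAntidiagonal,
          ((Finset.range p.2).image (fun b => (p.1, p.2, b))).card = p.2 := by
        intro p _
        rw [Finset.card_image_of_injective _ (fun x y hxy => by
          simpa using hxy)]
        exact Finset.card_range p.2
      rw [Finset.sum_congr rfl this]
      exact Nat.sum_divisorsAntidiagonal' (f := fun _ y => y)
    · intro p hp q hq hpq
      simp only [Finset.disjoint_left, Finset.mem_image, Finset.mem_range]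
      rintro t ⟨b, hb, rfl⟩ ⟨b', hb', het⟩
      apply hpq
      simp only [Prod.mk.injEq] at het
      exact Prod.ext het.1.symm het.2.1.symm
  constructor
  · rw [hset]; exact (F.image _).finite_toSet
  · rw [hset, Set.ncard_coe_finset, Finset.card_image_of_injOn hinj, hcardF]
end

section
/- Let f : ℝ² → ℂ be twice continuously differentiable and 2π-periodic in its second variable, i.e. f(t, θ + 2π) = f(t, θ) for all (t, θ). Write u = Re f, v = Im f, and ∂̄f := ½(∂₁f + i·∂₂f). Then for all real numbers a ≤ b: ∫_a^b ∫_0^{2π} (|∂₁f|² + |∂₂f|²) dθ dt = 4·∫_a^b ∫_0^{2π} |∂̄f|² dθ dt + 2·(B(b) − B(a)), where B(t) := ∫_0^{2π} u(t,θ)·∂₂v(t,θ) dθ. (This is formula (5.5) of the paper: integrating the identity |df|² = 4|∂̄f|² + 2 d(u dv) over a cylinder via Stokes' theorem, with the θ-boundary terms cancelling by periodicity.) -/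
open Real intervalIntegral

section EnergyStokesAux

open MeasureTheory Set

private lemma cx_ident (z w : ℂ) :
    ‖z‖ ^ 2 + ‖w‖ ^ 2
      = 4 * ‖(1 / 2 : ℂ) * (z + Complex.I * w)‖ ^ 2
        + 2 * (z.re * w.im - z.im * w.re) := by
  have h : ∀ x : ℂ, ‖x‖ ^ 2 = x.re ^ 2 + x.im ^ 2 := fun x => by
    rw [← Complex.normSq_eq_norm_sq, Complex.normSq_apply]; ring
  have h2 : ‖(1 / 2 : ℂ) * (z + Complex.I * w)‖ = (1/2) * ‖z + Complex.I * w‖ := by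
    rw [norm_mul]; norm_num
  rw [h2, mul_pow, h, h, h]
  simp only [Complex.add_re, Complex.add_im, Complex.mul_re, Complex.mul_im,
    Complex.I_re, Complex.I_im]
  ring

private lemma swap_int {F : ℝ × ℝ → ℝ} (hF : Continuous F) {a b c d : ℝ}
    (hab : a ≤ b) (hcd : c ≤ d) :
    ∫ t in a..b, ∫ θ in c..d, F (t, θ) = ∫ θ in c..d, ∫ t in a..b, F (t, θ) := by
  simp_rw [intervalIntegral.integral_of_le hab, intervalIntegral.integral_of_le hcd]
  apply MeasureTheory.integral_integral_swap
  rw [Measure.prod_restrict]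
  have : IntegrableOn (Function.uncurry fun t θ => F (t, θ)) (Ioc a b ×ˢ Ioc c d) volume := by
    apply (hF.continuousOn.integrableOn_compact (isCompact_Icc.prod isCompact_Icc)).mono_set
      (Set.prod_mono Set.Ioc_subset_Icc_self Set.Ioc_subset_Icc_self)
  simpa [IntegrableOn, Measure.volume_eq_prod] using this

variable {f : ℝ × ℝ → ℂ}

private lemma fderiv_im_comp (hf : Differentiable ℝ f) (p : ℝ × ℝ) (w : ℝ × ℝ) :
    fderiv ℝ (fun q => (f q).im) p w = (fderiv ℝ f p w).im := by
  have h : HasFDerivAt (fun q => (f q).im) (Complex.imCLM.comp (fderiv ℝ f p)) p :=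
    (Complex.imCLM.hasFDerivAt.comp p (hf p).hasFDerivAt)
  rw [h.fderiv]; rfl

private lemma fderiv_periodic (hf : ContDiff ℝ 2 f)
    (hper : ∀ t θ : ℝ, f (t, θ + 2 * π) = f (t, θ)) (t θ : ℝ) :
    fderiv ℝ f (t, θ + 2 * π) = fderiv ℝ f (t, θ) := by
  have hfd : Differentiable ℝ f := hf.differentiable (by norm_num)
  have hT : ∀ p : ℝ × ℝ, HasFDerivAt (fun q : ℝ × ℝ => q + ((0:ℝ), 2 * π))
      (ContinuousLinearMap.id ℝ (ℝ × ℝ)) p := fun p => (hasFDerivAt_id p).add_const _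
  have hcomp : HasFDerivAt (fun q : ℝ × ℝ => f (q + ((0:ℝ), 2 * π)))
      ((fderiv ℝ f ((t, θ) + ((0:ℝ), 2 * π))).comp (ContinuousLinearMap.id ℝ (ℝ × ℝ))) (t, θ) :=
    (hfd _).hasFDerivAt.comp _ (hT (t, θ))
  have heq : (fun q : ℝ × ℝ => f (q + ((0:ℝ), 2 * π))) = f := by
    funext q
    have hq : q + ((0:ℝ), 2 * π) = (q.1, q.2 + 2 * π) := by simp [Prod.ext_iff]
    rw [hq, hper q.1 q.2]
  rw [heq] at hcomp
  have h2 : ((t:ℝ), θ) + ((0:ℝ), 2 * π) = (t, θ + 2 * π) := by simp [Prod.ext_iff]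
  rw [h2] at hcomp
  have h3 := hcomp.fderiv
  rw [ContinuousLinearMap.comp_id] at h3
  exact h3.symm

private lemma hasFDerivAt_fderiv_apply (hf : ContDiff ℝ 2 f) (p : ℝ × ℝ) (w : ℝ × ℝ) :
    HasFDerivAt (fun q => fderiv ℝ f q w)
      ((fderiv ℝ (fderiv ℝ f) p).flip w) p := by
  have hf1 : ContDiff ℝ 1 (fderiv ℝ f) := hf.fderiv_right (by norm_num)
  have hD : HasFDerivAt (fderiv ℝ f) (fderiv ℝ (fderiv ℝ f) p) p :=
    (hf1.differentiable (by norm_num) p).hasFDerivAt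
  have := hD.clm_apply (hasFDerivAt_const w p)
  simpa using this

private lemma clairaut (hf : ContDiff ℝ 2 f) (p : ℝ × ℝ) (v w : ℝ × ℝ) :
    fderiv ℝ (fderiv ℝ f) p v w = fderiv ℝ (fderiv ℝ f) p w v :=
  (hf.contDiffAt.isSymmSndFDerivAt (by norm_num)) v w

/-- the function `u · (∂f in direction w).im` -/
private noncomputable def uvd (f : ℝ × ℝ → ℂ) (w : ℝ × ℝ) (p : ℝ × ℝ) : ℝ :=
  (f p).re * (fderiv ℝ f p w).im

private lemma uvd_contDiff (hf : ContDiff ℝ 2 f) (w : ℝ × ℝ) :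
    ContDiff ℝ 1 (uvd f w) := by
  have h1 : ContDiff ℝ 1 (fun p => (f p).re) :=
    (Complex.reCLM.contDiff.comp hf).of_le one_le_two
  have h2 : ContDiff ℝ 1 (fun p => (fderiv ℝ f p w).im) :=
    Complex.imCLM.contDiff.comp ((hf.fderiv_right (by norm_num)).clm_apply contDiff_const)
  exact h1.mul h2

private lemma fderiv_uvd (hf : ContDiff ℝ 2 f) (w : ℝ × ℝ) (p : ℝ × ℝ) (w' : ℝ × ℝ) :
    fderiv ℝ (uvd f w) p w'
      = (f p).re * (fderiv ℝ (fderiv ℝ f) p w' w).im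
        + (fderiv ℝ f p w).im * (fderiv ℝ f p w').re := by
  have hfd : Differentiable ℝ f := hf.differentiable (by norm_num)
  have hu : HasFDerivAt (fun q => (f q).re) (Complex.reCLM.comp (fderiv ℝ f p)) p :=
    Complex.reCLM.hasFDerivAt.comp p (hfd p).hasFDerivAt
  have hd : HasFDerivAt (fun q => (fderiv ℝ f q w).im)
      (Complex.imCLM.comp ((fderiv ℝ (fderiv ℝ f) p).flip w)) p :=
    Complex.imCLM.hasFDerivAt.comp p (hasFDerivAt_fderiv_apply hf p w)
  have hmul := hu.mul hd
  have := hmul.fderiv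
  rw [show ((fun q => (f q).re) * fun q => (fderiv ℝ f q w).im) = uvd f w from rfl] at this
  rw [this]
  simp [ContinuousLinearMap.smul_apply, ContinuousLinearMap.flip_apply, mul_comm]

private lemma hasDerivAt_slice_fst {G : ℝ × ℝ → ℝ} (hG : ContDiff ℝ 1 G) (t θ : ℝ) :
    HasDerivAt (fun s => G (s, θ)) (fderiv ℝ G (t, θ) (1, 0)) t := by
  have h1 : HasDerivAt (fun s : ℝ => (s, θ)) ((1:ℝ), (0:ℝ)) t :=
    (hasDerivAt_id t).prodMk (hasDerivAt_const t θ)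
  exact (hG.differentiable (by norm_num) (t, θ)).hasFDerivAt.comp_hasDerivAt t h1

private lemma hasDerivAt_slice_snd {G : ℝ × ℝ → ℝ} (hG : ContDiff ℝ 1 G) (t θ : ℝ) :
    HasDerivAt (fun s => G (t, s)) (fderiv ℝ G (t, θ) (0, 1)) θ := by
  have h1 : HasDerivAt (fun s : ℝ => (t, s)) ((0:ℝ), (1:ℝ)) θ :=
    (hasDerivAt_const θ t).prodMk (hasDerivAt_id θ)
  exact (hG.differentiable (by norm_num) (t, θ)).hasFDerivAt.comp_hasDerivAt θ h1

private lemma continuous_fderiv_apply {G : ℝ × ℝ → ℝ} (hG : ContDiff ℝ 1 G) (w : ℝ × ℝ) :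
    Continuous (fun p => fderiv ℝ G p w) :=
  (hG.continuous_fderiv (by norm_num)).clm_apply continuous_const

private lemma continuous_fderiv_apply' (hf : ContDiff ℝ 2 f) (w : ℝ × ℝ) :
    Continuous (fun p => fderiv ℝ f p w) :=
  (hf.continuous_fderiv (by norm_num)).clm_apply continuous_const

end EnergyStokesAux

/-- Formula (5.5): for `f : ℝ² → ℂ` twice continuously differentiable and `2π`-periodic
in the second variable, integrating `|df|² = 4|∂̄f|² + 2 d(u dv)` over the cylinder
`[a,b] × [0,2π]` gives
`∫∫ |df|² = 4 ∫∫ |∂̄f|² + 2(B(b) − B(a))`, where `B(t) = ∫_0^{2π} u(t,θ)·∂₂v(t,θ) dθ`. -/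
theorem energy_stokes_identity (f : ℝ × ℝ → ℂ)
    (hf : ContDiff ℝ 2 f)
    (hper : ∀ t θ : ℝ, f (t, θ + 2 * π) = f (t, θ))
    (a b : ℝ) (hab : a ≤ b) :
    (∫ t in a..b, ∫ θ in (0:ℝ)..(2 * π),
        (‖fderiv ℝ f (t, θ) (1, 0)‖ ^ 2 + ‖fderiv ℝ f (t, θ) (0, 1)‖ ^ 2))
      = 4 * (∫ t in a..b, ∫ θ in (0:ℝ)..(2 * π),
            ‖(1 / 2 : ℂ) * (fderiv ℝ f (t, θ) (1, 0) + Complex.I * fderiv ℝ f (t, θ) (0, 1))‖ ^ 2)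
        + 2 * ((∫ θ in (0:ℝ)..(2 * π),
                  (f (b, θ)).re * fderiv ℝ (fun q => (f q).im) (b, θ) (0, 1))
             - (∫ θ in (0:ℝ)..(2 * π),
                  (f (a, θ)).re * fderiv ℝ (fun q => (f q).im) (a, θ) (0, 1))) := by
  have hfd : Differentiable ℝ f := hf.differentiable (by norm_num)
  have h2π : (0:ℝ) ≤ 2 * π := by positivity
  -- names for the main pointwise functions
  set W : ℝ × ℝ → ℝ := fun p =>
    ‖(1 / 2 : ℂ) * (fderiv ℝ f p (1, 0) + Complex.I * fderiv ℝ f p (0, 1))‖ ^ 2 with hW_def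
  set Dg : ℝ × ℝ → ℝ := fun p => fderiv ℝ (uvd f (0, 1)) p (1, 0) with hDg_def
  set Dh : ℝ × ℝ → ℝ := fun p => fderiv ℝ (uvd f (1, 0)) p (0, 1) with hDh_def
  -- continuity facts
  have hF1c : Continuous (fun p => fderiv ℝ f p ((1:ℝ), (0:ℝ))) := continuous_fderiv_apply' hf _
  have hF2c : Continuous (fun p => fderiv ℝ f p ((0:ℝ), (1:ℝ))) := continuous_fderiv_apply' hf _
  have hWc : Continuous W := by
    apply Continuous.pow
    exact (continuous_const.mul (hF1c.add (continuous_const.mul hF2c))).norm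
  have hgC : ContDiff ℝ 1 (uvd f ((0:ℝ), (1:ℝ))) := uvd_contDiff hf _
  have hhC : ContDiff ℝ 1 (uvd f ((1:ℝ), (0:ℝ))) := uvd_contDiff hf _
  have hDgc : Continuous Dg := continuous_fderiv_apply hgC _
  have hDhc : Continuous Dh := continuous_fderiv_apply hhC _
  have hEc : Continuous (fun p : ℝ × ℝ =>
      ‖fderiv ℝ f p (1, 0)‖ ^ 2 + ‖fderiv ℝ f p (0, 1)‖ ^ 2) :=
    (hF1c.norm.pow 2).add (hF2c.norm.pow 2)
  -- the pointwise identity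
  have hpoint : ∀ p : ℝ × ℝ,
      ‖fderiv ℝ f p (1, 0)‖ ^ 2 + ‖fderiv ℝ f p (0, 1)‖ ^ 2
        = 4 * W p + 2 * (Dg p - Dh p) := by
    intro p
    have hcx := cx_ident (fderiv ℝ f p (1, 0)) (fderiv ℝ f p (0, 1))
    have h1 := fderiv_uvd hf ((0:ℝ), (1:ℝ)) p ((1:ℝ), (0:ℝ))
    have h2 := fderiv_uvd hf ((1:ℝ), (0:ℝ)) p ((0:ℝ), (1:ℝ))
    have hc := clairaut hf p ((1:ℝ), (0:ℝ)) ((0:ℝ), (1:ℝ))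
    have hDgh : Dg p - Dh p
        = (fderiv ℝ f p (1, 0)).re * (fderiv ℝ f p (0, 1)).im
          - (fderiv ℝ f p (1, 0)).im * (fderiv ℝ f p (0, 1)).re := by
      rw [hDg_def, hDh_def]
      simp only
      rw [h1, h2, hc]
      ring
    rw [hcx, hDgh]
  -- θ-boundary: the h-term integrates to zero
  have hbd : ∀ t : ℝ, (∫ θ in (0:ℝ)..(2 * π), Dh (t, θ)) = 0 := by
    intro t
    have hftc : (∫ θ in (0:ℝ)..(2 * π), Dh (t, θ))
        = uvd f (1, 0) (t, 2 * π) - uvd f (1, 0) (t, 0) := by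
      exact intervalIntegral.integral_eq_sub_of_hasDerivAt
        (f := fun θ => uvd f (1, 0) (t, θ)) (f' := fun θ => Dh (t, θ))
        (fun θ _ => hasDerivAt_slice_snd hhC t θ)
        ((hDhc.comp (continuous_const.prodMk continuous_id)).intervalIntegrable _ _)
    rw [hftc]
    have hper' : uvd f (1, 0) (t, 2 * π) = uvd f (1, 0) (t, 0) := by
      have h0 : (2:ℝ) * π = 0 + 2 * π := by ring
      rw [uvd, uvd, h0, hper t 0, fderiv_periodic hf hper t 0]
    rw [hper']; ring
  -- FTC in t for the g-term
  have hgint : ∀ θ : ℝ, (∫ t in a..b, Dg (t, θ))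
      = uvd f (0, 1) (b, θ) - uvd f (0, 1) (a, θ) := by
    intro θ
    exact intervalIntegral.integral_eq_sub_of_hasDerivAt
      (f := fun t => uvd f (0, 1) (t, θ)) (f' := fun t => Dg (t, θ))
      (fun t _ => hasDerivAt_slice_fst hgC t θ)
      ((hDgc.comp (continuous_id.prodMk continuous_const)).intervalIntegrable _ _)
  -- inner integral identity
  have hinner : ∀ t : ℝ,
      (∫ θ in (0:ℝ)..(2 * π),
          (‖fderiv ℝ f (t, θ) (1, 0)‖ ^ 2 + ‖fderiv ℝ f (t, θ) (0, 1)‖ ^ 2))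
        = 4 * (∫ θ in (0:ℝ)..(2 * π), W (t, θ))
          + 2 * (∫ θ in (0:ℝ)..(2 * π), Dg (t, θ)) := by
    intro t
    have hcg : ∀ θ : ℝ, ‖fderiv ℝ f (t, θ) (1, 0)‖ ^ 2 + ‖fderiv ℝ f (t, θ) (0, 1)‖ ^ 2
        = 4 * W (t, θ) + 2 * (Dg (t, θ) - Dh (t, θ)) := fun θ => hpoint (t, θ)
    rw [intervalIntegral.integral_congr (g := fun θ =>
      4 * W (t, θ) + 2 * (Dg (t, θ) - Dh (t, θ))) (fun θ _ => hcg θ)]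
    have iW : IntervalIntegrable (fun θ => W (t, θ)) MeasureTheory.volume 0 (2 * π) :=
      (hWc.comp (continuous_const.prodMk continuous_id)).intervalIntegrable _ _
    have iDg : IntervalIntegrable (fun θ => Dg (t, θ)) MeasureTheory.volume 0 (2 * π) :=
      (hDgc.comp (continuous_const.prodMk continuous_id)).intervalIntegrable _ _
    have iDh : IntervalIntegrable (fun θ => Dh (t, θ)) MeasureTheory.volume 0 (2 * π) :=
      (hDhc.comp (continuous_const.prodMk continuous_id)).intervalIntegrable _ _
    rw [intervalIntegral.integral_add ((iW.const_mul 4))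
      (((iDg.sub iDh).const_mul 2)), intervalIntegral.integral_const_mul,
      intervalIntegral.integral_const_mul, intervalIntegral.integral_sub iDg iDh, hbd t]
    ring
  -- rewrite the outer integral
  rw [intervalIntegral.integral_congr (fun t _ => hinner t)]
  -- split the outer integral
  have hWcont : Continuous (fun t => ∫ θ in (0:ℝ)..(2 * π), W (t, θ)) := by
    apply intervalIntegral.continuous_parametric_intervalIntegral_of_continuous'
    exact hWc
  have hDgcont : Continuous (fun t => ∫ θ in (0:ℝ)..(2 * π), Dg (t, θ)) := by
    apply intervalIntegral.continuous_parametric_intervalIntegral_of_continuous'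
    exact hDgc
  rw [intervalIntegral.integral_add
    ((hWcont.intervalIntegrable a b).const_mul 4)
    ((hDgcont.intervalIntegrable a b).const_mul 2),
    intervalIntegral.integral_const_mul, intervalIntegral.integral_const_mul]
  congr 1
  -- the boundary term
  have hswap : (∫ t in a..b, ∫ θ in (0:ℝ)..(2 * π), Dg (t, θ))
      = ∫ θ in (0:ℝ)..(2 * π), ∫ t in a..b, Dg (t, θ) := swap_int hDgc hab h2π
  have hgb : Continuous (fun θ => uvd f ((0:ℝ), (1:ℝ)) (b, θ)) :=
    (hgC.continuous).comp (continuous_const.prodMk continuous_id)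
  have hga : Continuous (fun θ => uvd f ((0:ℝ), (1:ℝ)) (a, θ)) :=
    (hgC.continuous).comp (continuous_const.prodMk continuous_id)
  rw [hswap, intervalIntegral.integral_congr (fun θ _ => hgint θ),
    intervalIntegral.integral_sub (hgb.intervalIntegrable _ _) (hga.intervalIntegrable _ _)]
  have hmatch : ∀ t θ : ℝ, (f (t, θ)).re * fderiv ℝ (fun q => (f q).im) (t, θ) (0, 1)
      = uvd f (0, 1) (t, θ) := by
    intro t θ
    rw [uvd, fderiv_im_comp hfd]
  simp_rw [hmatch]
end

section
/- Let δ ∈ (0,1], μ > 0, T > 0, and set ρ(t) := (2μ·cosh(2t))^{1/2}. Then every continuously differentiable function w : ℝ → ℝ satisfies ∫_{−T}^{T} ρ(t)^δ·w(t)² dt ≤ (16/δ²)·∫_{−T}^{T} ρ(t)^δ·w′(t)² dt + (4/δ)·ρ(T)^δ·(w(T)² + w(−T)²). (This is the weighted Poincaré inequality (8.3) of the paper — obtained by writing ρ^δ as the derivative of ψ(t) = ∫_0^t ρ^δ and integrating by parts — which controls the weighted L² norm of a 1-form on the neck by its derivative and boundary values.) -/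
open Real intervalIntegral

namespace WeightedPoincareAux

noncomputable def rho (μ δ t : ℝ) : ℝ := Real.sqrt (2 * μ * Real.cosh (2 * t)) ^ δ

lemma base_pos (μ : ℝ) (hμ : 0 < μ) (t : ℝ) : 0 < 2 * μ * Real.cosh (2 * t) := by
  have := Real.cosh_pos (x := 2 * t); positivity

lemma rho_pos (μ δ : ℝ) (hμ : 0 < μ) (t : ℝ) : 0 < rho μ δ t :=
  Real.rpow_pos_of_pos (Real.sqrt_pos.mpr (base_pos μ hμ t)) δ

lemma rho_even (μ δ t : ℝ) : rho μ δ (-t) = rho μ δ t := by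
  simp [rho, mul_neg, Real.cosh_neg]

lemma rho_cont (μ δ : ℝ) (hδ : 0 ≤ δ) : Continuous (rho μ δ) := by
  apply Continuous.rpow_const
  · exact (continuous_const.mul (Real.continuous_cosh.comp
      (continuous_const.mul continuous_id))).sqrt
  · exact fun x => Or.inr hδ

/-- lower bound: `√μ ^ δ * exp (δ t) ≤ rho μ δ t`. -/
lemma rho_lower (μ δ : ℝ) (hμ : 0 < μ) (hδ : 0 ≤ δ) (t : ℝ) :
    Real.sqrt μ ^ δ * Real.exp (δ * t) ≤ rho μ δ t := by
  have h1 : Real.sqrt μ * Real.exp t ≤ Real.sqrt (2 * μ * Real.cosh (2 * t)) := by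
    rw [show Real.sqrt μ * Real.exp t = Real.sqrt (μ * Real.exp t ^ 2) by
      rw [Real.sqrt_mul hμ.le, Real.sqrt_sq (Real.exp_pos t).le]]
    apply Real.sqrt_le_sqrt
    have hcosh : Real.exp (2 * t) ≤ 2 * Real.cosh (2 * t) := by
      rw [Real.cosh_eq]; have := (Real.exp_pos (-(2*t))).le; linarith
    have : Real.exp t ^ 2 = Real.exp (2 * t) := by
      rw [← Real.exp_nat_mul]; norm_num [mul_comm]
    rw [this]
    calc μ * Real.exp (2 * t) ≤ μ * (2 * Real.cosh (2 * t)) := by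
          exact mul_le_mul_of_nonneg_left hcosh hμ.le
      _ = 2 * μ * Real.cosh (2 * t) := by ring
  have h2 : (Real.sqrt μ * Real.exp t) ^ δ ≤ rho μ δ t :=
    Real.rpow_le_rpow (by positivity) h1 hδ
  calc Real.sqrt μ ^ δ * Real.exp (δ * t)
      = (Real.sqrt μ * Real.exp t) ^ δ := by
        rw [Real.mul_rpow (Real.sqrt_nonneg μ) (Real.exp_pos t).le,
          mul_comm δ t, Real.exp_mul]
    _ ≤ rho μ δ t := h2

/-- upper bound for `t ≥ 0`: `rho μ δ t ≤ √(2μ) ^ δ * exp (δ t)`. -/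
lemma rho_upper (μ δ : ℝ) (hμ : 0 < μ) (hδ : 0 ≤ δ) (t : ℝ) (ht : 0 ≤ t) :
    rho μ δ t ≤ Real.sqrt (2 * μ) ^ δ * Real.exp (δ * t) := by
  have h1 : Real.sqrt (2 * μ * Real.cosh (2 * t)) ≤ Real.sqrt (2 * μ) * Real.exp t := by
    rw [show Real.sqrt (2 * μ) * Real.exp t = Real.sqrt (2 * μ * Real.exp t ^ 2) by
      conv_rhs => rw [Real.sqrt_mul (by positivity : (0:ℝ) ≤ 2 * μ)]
      rw [Real.sqrt_sq (Real.exp_pos t).le]]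
    apply Real.sqrt_le_sqrt
    have he : Real.exp t ^ 2 = Real.exp (2 * t) := by
      rw [← Real.exp_nat_mul]; norm_num [mul_comm]
    rw [he]
    have hcosh : Real.cosh (2 * t) ≤ Real.exp (2 * t) := by
      rw [Real.cosh_eq]
      have : Real.exp (-(2 * t)) ≤ Real.exp (2 * t) :=
        Real.exp_le_exp.mpr (by linarith)
      linarith
    nlinarith
  calc rho μ δ t ≤ (Real.sqrt (2 * μ) * Real.exp t) ^ δ :=
        Real.rpow_le_rpow (Real.sqrt_nonneg _) h1 hδ
    _ = Real.sqrt (2 * μ) ^ δ * Real.exp (δ * t) := by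
        rw [Real.mul_rpow (Real.sqrt_nonneg _) (Real.exp_pos t).le,
          mul_comm δ t, Real.exp_mul]

noncomputable def psi (μ δ t : ℝ) : ℝ := ∫ s in (0:ℝ)..t, rho μ δ s

lemma psi_odd (μ δ : ℝ) (hδ : 0 ≤ δ) (t : ℝ) : psi μ δ (-t) = - psi μ δ t := by
  have h1 : psi μ δ (-t) = ∫ s in (0:ℝ)..(-t), rho μ δ (-s) := by
    unfold psi
    exact (intervalIntegral.integral_congr (fun s _ => (rho_even μ δ s).symm))
  rw [h1, intervalIntegral.integral_comp_neg (fun s => rho μ δ s)]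
  simp [psi, ← intervalIntegral.integral_symm]

lemma psi_nonneg (μ δ : ℝ) (hμ : 0 < μ) (hδ : 0 ≤ δ) (t : ℝ) (ht : 0 ≤ t) :
    0 ≤ psi μ δ t :=
  intervalIntegral.integral_nonneg ht (fun s _ => (rho_pos μ δ hμ s).le)

lemma psi_le (μ δ : ℝ) (hμ : 0 < μ) (hδ0 : 0 < δ) (hδ1 : δ ≤ 1) (t : ℝ) (ht : 0 ≤ t) :
    psi μ δ t ≤ (2 / δ) * rho μ δ t := by
  have hcont := rho_cont μ δ hδ0.le
  -- step 1: bound the integral by an exponential integral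
  have key : psi μ δ t ≤ ∫ s in (0:ℝ)..t, Real.sqrt (2*μ) ^ δ * Real.exp (δ * s) := by
    apply intervalIntegral.integral_mono_on ht
      (hcont.intervalIntegrable 0 t)
      ((continuous_const.mul (Real.continuous_exp.comp
        (continuous_const.mul continuous_id))).intervalIntegrable 0 t)
    intro s hs
    exact rho_upper μ δ hμ hδ0.le s hs.1
  -- step 2: compute the exponential integral
  have hderiv : ∀ s ∈ Set.uIcc (0:ℝ) t, HasDerivAt
      (fun s => Real.sqrt (2*μ) ^ δ * (Real.exp (δ * s) / δ))
      (Real.sqrt (2*μ) ^ δ * Real.exp (δ * s)) s := by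
    intro s _
    have h1 : HasDerivAt (fun s : ℝ => δ * s) δ s := by
      simpa using (hasDerivAt_id s).const_mul δ
    have h2 : HasDerivAt (fun s => Real.exp (δ * s)) (Real.exp (δ * s) * δ) s :=
      (Real.hasDerivAt_exp (δ * s)).comp s h1
    have h3 := (h2.div_const δ).const_mul (Real.sqrt (2*μ) ^ δ)
    refine h3.congr_deriv ?_
    rw [mul_div_cancel_right₀ _ hδ0.ne']
  have hint : (∫ s in (0:ℝ)..t, Real.sqrt (2*μ) ^ δ * Real.exp (δ * s))
      = Real.sqrt (2*μ) ^ δ * (Real.exp (δ * t) / δ)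
        - Real.sqrt (2*μ) ^ δ * (Real.exp (δ * 0) / δ) := by
    apply intervalIntegral.integral_eq_sub_of_hasDerivAt hderiv
    exact (continuous_const.mul (Real.continuous_exp.comp
        (continuous_const.mul continuous_id))).intervalIntegrable 0 t
  -- step 3: compare to rho
  have hexp : Real.sqrt (2*μ) ^ δ * (Real.exp (δ * t) / δ)
      ≤ (2 / δ) * rho μ δ t := by
    have hsplit : Real.sqrt (2*μ) ^ δ = Real.sqrt 2 ^ δ * Real.sqrt μ ^ δ := by
      rw [← Real.mul_rpow (Real.sqrt_nonneg 2) (Real.sqrt_nonneg μ),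
        ← Real.sqrt_mul (by norm_num : (0:ℝ) ≤ 2)]
    have hs2 : Real.sqrt 2 ^ δ ≤ 2 := by
      calc Real.sqrt 2 ^ δ ≤ Real.sqrt 2 ^ (1:ℝ) := by
            apply Real.rpow_le_rpow_of_exponent_le _ hδ1
            rw [show (1:ℝ) = Real.sqrt 1 by simp]
            exact Real.sqrt_le_sqrt (by norm_num)
        _ = Real.sqrt 2 := Real.rpow_one _
        _ ≤ 2 := by
            nlinarith [Real.sq_sqrt (by norm_num : (0:ℝ) ≤ 2), Real.sqrt_nonneg 2]
    have hlow := rho_lower μ δ hμ hδ0.le t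
    have hexp_pos := Real.exp_pos (δ * t)
    have hμδ : 0 < Real.sqrt μ ^ δ :=
      Real.rpow_pos_of_pos (Real.sqrt_pos.mpr hμ) δ
    calc Real.sqrt (2*μ) ^ δ * (Real.exp (δ * t) / δ)
        = (Real.sqrt 2 ^ δ) * (Real.sqrt μ ^ δ * Real.exp (δ * t)) / δ := by
          rw [hsplit]; ring
      _ ≤ 2 * (Real.sqrt μ ^ δ * Real.exp (δ * t)) / δ := by
          gcongr
      _ ≤ 2 * rho μ δ t / δ := by
          gcongr
      _ = (2 / δ) * rho μ δ t := by ring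
  have hnn : 0 ≤ Real.sqrt (2*μ) ^ δ * (Real.exp (δ * 0) / δ) := by positivity
  calc psi μ δ t ≤ _ := key
    _ = Real.sqrt (2*μ) ^ δ * (Real.exp (δ * t) / δ)
        - Real.sqrt (2*μ) ^ δ * (Real.exp (δ * 0) / δ) := hint
    _ ≤ Real.sqrt (2*μ) ^ δ * (Real.exp (δ * t) / δ) := by linarith
    _ ≤ (2 / δ) * rho μ δ t := hexp

lemma psi_abs_le (μ δ : ℝ) (hμ : 0 < μ) (hδ0 : 0 < δ) (hδ1 : δ ≤ 1) (t : ℝ) :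
    |psi μ δ t| ≤ (2 / δ) * rho μ δ t := by
  rcases le_total 0 t with ht | ht
  · rw [abs_of_nonneg (psi_nonneg μ δ hμ hδ0.le t ht)]
    exact psi_le μ δ hμ hδ0 hδ1 t ht
  · have h1 : psi μ δ t = - psi μ δ (-t) := by
      rw [psi_odd μ δ hδ0.le, neg_neg]
    rw [h1, abs_neg, abs_of_nonneg (psi_nonneg μ δ hμ hδ0.le (-t) (by linarith))]
    calc psi μ δ (-t) ≤ (2 / δ) * rho μ δ (-t) :=
          psi_le μ δ hμ hδ0 hδ1 (-t) (by linarith)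
      _ = (2 / δ) * rho μ δ t := by rw [rho_even]

end WeightedPoincareAux

open WeightedPoincareAux

/-- The weighted Poincaré inequality (8.3): with `ρ(t) = (2μ cosh 2t)^{1/2}` and
`δ ∈ (0,1]`, every `C¹` function `w : ℝ → ℝ` satisfies
`∫_{−T}^{T} ρ^δ w² ≤ (16/δ²) ∫_{−T}^{T} ρ^δ (w′)² + (4/δ) ρ(T)^δ (w(T)² + w(−T)²)`. -/
theorem weighted_poincare (δ μ T : ℝ) (hδ0 : 0 < δ) (hδ1 : δ ≤ 1)
    (hμ : 0 < μ) (hT : 0 < T) (w : ℝ → ℝ) (hw : ContDiff ℝ 1 w) :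
    (∫ t in (-T)..T, Real.sqrt (2 * μ * Real.cosh (2 * t)) ^ δ * w t ^ 2)
      ≤ (16 / δ ^ 2) *
          (∫ t in (-T)..T, Real.sqrt (2 * μ * Real.cosh (2 * t)) ^ δ * deriv w t ^ 2)
        + (4 / δ) * Real.sqrt (2 * μ * Real.cosh (2 * T)) ^ δ * (w T ^ 2 + w (-T) ^ 2) := by
  have hρcont : Continuous (rho μ δ) := rho_cont μ δ hδ0.le
  have hwc : Continuous w := hw.continuous
  have hw' : Continuous (deriv w) := hw.continuous_deriv le_rfl
  have hwd : ∀ x : ℝ, HasDerivAt w (deriv w x) x := fun x =>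
    ((hw.differentiable one_ne_zero) x).hasDerivAt
  -- derivative of w^2
  have hsq : ∀ x : ℝ, HasDerivAt (fun t => w t ^ 2) (2 * w x * deriv w x) x := by
    intro x
    have := (hwd x).fun_pow 2
    simpa [mul_comm, mul_assoc, mul_left_comm] using this
  -- derivative of psi
  have hψ : ∀ x : ℝ, HasDerivAt (psi μ δ) (rho μ δ x) x := fun x =>
    (hρcont.integral_hasStrictDerivAt 0 x).hasDerivAt
  have hψcont : Continuous (psi μ δ) := by
    have : Differentiable ℝ (psi μ δ) := fun x => (hψ x).differentiableAt
    exact this.continuous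
  -- integration by parts
  have hibp : (∫ t in (-T)..T, w t ^ 2 * rho μ δ t)
      = w T ^ 2 * psi μ δ T - w (-T) ^ 2 * psi μ δ (-T)
        - ∫ t in (-T)..T, (2 * w t * deriv w t) * psi μ δ t := by
    apply intervalIntegral.integral_mul_deriv_eq_deriv_mul
      (fun x _ => hsq x) (fun x _ => hψ x)
    · exact ((continuous_const.mul hwc).mul hw').intervalIntegrable _ _
    · exact hρcont.intervalIntegrable _ _
  -- rewrite LHS
  have hLHS : (∫ t in (-T)..T, Real.sqrt (2 * μ * Real.cosh (2 * t)) ^ δ * w t ^ 2)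
      = ∫ t in (-T)..T, w t ^ 2 * rho μ δ t :=
    intervalIntegral.integral_congr (fun t _ => mul_comm _ _)
  have hRint : (∫ t in (-T)..T, Real.sqrt (2 * μ * Real.cosh (2 * t)) ^ δ * deriv w t ^ 2)
      = ∫ t in (-T)..T, rho μ δ t * deriv w t ^ 2 := rfl
  -- boundary term bound
  have hψodd : psi μ δ (-T) = - psi μ δ T := psi_odd μ δ hδ0.le T
  have hψT : 0 ≤ psi μ δ T := psi_nonneg μ δ hμ hδ0.le T hT.le
  have hψTle : psi μ δ T ≤ (2 / δ) * rho μ δ T := psi_le μ δ hμ hδ0 hδ1 T hT.le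
  have hbdy : w T ^ 2 * psi μ δ T - w (-T) ^ 2 * psi μ δ (-T)
      ≤ (2 / δ) * rho μ δ T * (w T ^ 2 + w (-T) ^ 2) := by
    rw [hψodd]
    have h1 : w T ^ 2 * psi μ δ T ≤ w T ^ 2 * ((2 / δ) * rho μ δ T) :=
      mul_le_mul_of_nonneg_left hψTle (sq_nonneg _)
    have h2 : w (-T) ^ 2 * psi μ δ T ≤ w (-T) ^ 2 * ((2 / δ) * rho μ δ T) :=
      mul_le_mul_of_nonneg_left hψTle (sq_nonneg _)
    nlinarith
  -- pointwise bound on the cross integrand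
  have hpt : ∀ t : ℝ, -((2 * w t * deriv w t) * psi μ δ t)
      ≤ (1/2) * (rho μ δ t * w t ^ 2) + (8 / δ ^ 2) * (rho μ δ t * deriv w t ^ 2) := by
    intro t
    have habs : |psi μ δ t| ≤ (2 / δ) * rho μ δ t := psi_abs_le μ δ hμ hδ0 hδ1 t
    have hρt := rho_pos μ δ hμ t
    have h1 : -((2 * w t * deriv w t) * psi μ δ t)
        ≤ 2 * |w t| * |deriv w t| * |psi μ δ t| := by
      calc -((2 * w t * deriv w t) * psi μ δ t) ≤ |(2 * w t * deriv w t) * psi μ δ t| :=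
            neg_le_abs _
        _ = 2 * |w t| * |deriv w t| * |psi μ δ t| := by
            rw [abs_mul, abs_mul, abs_mul]; norm_num
    have h2 : 2 * |w t| * |deriv w t| * |psi μ δ t|
        ≤ 2 * |w t| * |deriv w t| * ((2 / δ) * rho μ δ t) := by
      apply mul_le_mul_of_nonneg_left habs (by positivity)
    have h3 : 2 * |w t| * |deriv w t| * ((2 / δ) * rho μ δ t)
        ≤ (1/2) * (rho μ δ t * w t ^ 2) + (8 / δ ^ 2) * (rho μ δ t * deriv w t ^ 2) := by
      set c : ℝ := 1 / δ with hc_def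
      have hc : 0 < c := by positivity
      have h4 : 8 * c * (|w t| * |deriv w t|)
          ≤ |w t| ^ 2 + 16 * c ^ 2 * |deriv w t| ^ 2 := by
        nlinarith [sq_nonneg (|w t| - 4 * c * |deriv w t|)]
      have h5 := mul_le_mul_of_nonneg_right h4 hρt.le
      have e1 : (2:ℝ) / δ = 2 * c := by rw [hc_def]; ring
      have e2 : (8:ℝ) / δ ^ 2 = 8 * c ^ 2 := by rw [hc_def]; ring
      rw [e1, e2, ← sq_abs (w t), ← sq_abs (deriv w t)]
      linarith [h5]
    linarith
  -- integrate the pointwise bound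
  have hint1 : IntervalIntegrable (fun t => -((2 * w t * deriv w t) * psi μ δ t)) MeasureTheory.volume (-T) T := by
    apply Continuous.intervalIntegrable
    exact (((continuous_const.mul hwc).mul hw').mul hψcont).neg
  have hint2 : IntervalIntegrable
      (fun t => (1/2) * (rho μ δ t * w t ^ 2) + (8 / δ ^ 2) * (rho μ δ t * deriv w t ^ 2))
      MeasureTheory.volume (-T) T := by
    apply Continuous.intervalIntegrable
    exact (continuous_const.mul (hρcont.mul (hwc.pow 2))).add
      (continuous_const.mul (hρcont.mul (hw'.pow 2)))
  have hII : (∫ t in (-T)..T, -((2 * w t * deriv w t) * psi μ δ t))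
      ≤ ∫ t in (-T)..T, ((1/2) * (rho μ δ t * w t ^ 2) + (8 / δ ^ 2) * (rho μ δ t * deriv w t ^ 2)) :=
    intervalIntegral.integral_mono_on (by linarith) hint1 hint2 (fun t _ => hpt t)
  have hsplit : (∫ t in (-T)..T, ((1/2) * (rho μ δ t * w t ^ 2) + (8 / δ ^ 2) * (rho μ δ t * deriv w t ^ 2)))
      = (1/2) * (∫ t in (-T)..T, rho μ δ t * w t ^ 2)
        + (8 / δ ^ 2) * (∫ t in (-T)..T, rho μ δ t * deriv w t ^ 2) := by
    rw [intervalIntegral.integral_add (f := fun t => (1/2) * (rho μ δ t * w t ^ 2))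
      (g := fun t => (8 / δ ^ 2) * (rho μ δ t * deriv w t ^ 2))
      ((continuous_const.mul (hρcont.mul (hwc.pow 2))).intervalIntegrable _ _)
      ((continuous_const.mul (hρcont.mul (hw'.pow 2))).intervalIntegrable _ _),
      intervalIntegral.integral_const_mul, intervalIntegral.integral_const_mul]
  have hneg : (∫ t in (-T)..T, -((2 * w t * deriv w t) * psi μ δ t))
      = - ∫ t in (-T)..T, (2 * w t * deriv w t) * psi μ δ t :=
    intervalIntegral.integral_neg
  have hIeq : (∫ t in (-T)..T, rho μ δ t * w t ^ 2)
      = ∫ t in (-T)..T, w t ^ 2 * rho μ δ t :=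
    intervalIntegral.integral_congr (fun t _ => mul_comm _ _)
  set I := ∫ t in (-T)..T, w t ^ 2 * rho μ δ t with hI
  set D := ∫ t in (-T)..T, rho μ δ t * deriv w t ^ 2 with hD
  set J := ∫ t in (-T)..T, (2 * w t * deriv w t) * psi μ δ t with hJ
  have hmain : I ≤ (2 / δ) * rho μ δ T * (w T ^ 2 + w (-T) ^ 2) + ((1/2) * I + (8 / δ ^ 2) * D) := by
    have : -J ≤ (1/2) * I + (8 / δ ^ 2) * D := by
      rw [← hneg] at *
      calc (∫ t in (-T)..T, -((2 * w t * deriv w t) * psi μ δ t)) ≤ _ := hII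
        _ = (1/2) * (∫ t in (-T)..T, rho μ δ t * w t ^ 2) + (8 / δ ^ 2) * D := hsplit
        _ = (1/2) * I + (8 / δ ^ 2) * D := by rw [hIeq]
    linarith [hibp, hbdy]
  rw [hLHS, hRint]
  have hc1 : (16 / δ ^ 2 : ℝ) = 2 * (8 / δ ^ 2) := by ring
  have hc2 : (4 / δ : ℝ) * Real.sqrt (2 * μ * Real.cosh (2 * T)) ^ δ
      = 2 * ((2 / δ) * rho μ δ T) := by unfold rho; ring
  rw [hc1, hc2]
  linarith
end
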